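/- Sign change characterizes odd-multiplicity roots: for a nonzero p : Polynomial ℝ, there exist a b : ℝ with p.eval a < 0 and 0 < p.eval b if and only if there exists x : ℝ such that Polynomial.rootMultiplicity x p is odd. -/
import Mathlib

open Polynomial

private lemma sign_preserve {r s : ℝ} (h : |s - r| < |r|) :
    (0 < r → 0 < s) ∧ (r < 0 → s < 0) := by
  rcases abs_cases (s - r) with ⟨h1, _⟩ | ⟨h1, _⟩ <;>
    rcases abs_cases r with ⟨h2, _⟩ | ⟨h2, _⟩ <;>
    constructor <;> intro <;> nlinarith

private lemma odd_root_sign_change (p : Polynomial ℝ) (hp : p ≠ 0) (x : ℝ)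
    (hodd : Odd (Polynomial.rootMultiplicity x p)) :
    ∃ a b : ℝ, p.eval a < 0 ∧ 0 < p.eval b := by
  set m := p.rootMultiplicity x with hm
  set q := p /ₘ (X - C x) ^ m with hqdef
  have hpq : (X - C x) ^ m * q = p := p.pow_mul_divByMonic_rootMultiplicity_eq x
  have hqx : q.eval x ≠ 0 := eval_divByMonic_pow_rootMultiplicity_ne_zero x hp
  have hcont : ContinuousAt (fun y => q.eval y) x := (q.continuous_aeval).continuousAt
  rw [Metric.continuousAt_iff] at hcont
  obtain ⟨δ, hδ, hball⟩ := hcont |q.eval x| (abs_pos.mpr hqx)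
  have hev : ∀ y : ℝ, |y - x| < δ →
      (0 < q.eval x → 0 < q.eval y) ∧ (q.eval x < 0 → q.eval y < 0) := by
    intro y hy
    exact sign_preserve (hball (by simpa [Real.dist_eq] using hy))
  have h1 : |(x + δ/2) - x| < δ := by rw [add_sub_cancel_left]; rw [abs_of_pos] <;> linarith
  have h2 : |(x - δ/2) - x| < δ := by
    have : (x - δ/2) - x = -(δ/2) := by ring
    rw [this, abs_neg, abs_of_pos] <;> linarith
  have hposp : (0:ℝ) < ((x + δ/2) - x) ^ m := by
    apply pow_pos; linarith [add_sub_cancel_left x (δ/2)]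
  have hnegp : ((x - δ/2) - x) ^ m < 0 := by
    apply Odd.pow_neg hodd; linarith
  have hevalp : ∀ y, p.eval y = (y - x) ^ m * q.eval y := by
    intro y; rw [← hpq]; simp
  rcases lt_or_gt_of_ne hqx with hneg | hpos
  · exact ⟨x + δ/2, x - δ/2, by rw [hevalp]; exact mul_neg_of_pos_of_neg hposp ((hev _ h1).2 hneg),
      by rw [hevalp]; exact mul_pos_of_neg_of_neg hnegp ((hev _ h2).2 hneg)⟩
  · exact ⟨x - δ/2, x + δ/2, by rw [hevalp]; exact mul_neg_of_neg_of_pos hnegp ((hev _ h2).1 hpos),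
      by rw [hevalp]; exact mul_pos hposp ((hev _ h1).1 hpos)⟩

private lemma sign_change_odd_root : ∀ n (p : Polynomial ℝ), p.natDegree = n → p ≠ 0 →
    ∀ a b : ℝ, p.eval a < 0 → 0 < p.eval b →
    ∃ x : ℝ, Odd (Polynomial.rootMultiplicity x p) := by
  intro n
  induction n using Nat.strong_induction_on with
  | _ n ih =>
    intro p hdeg hp a b ha hb
    -- IVT: a root x exists with p.eval x = 0
    have hcont : Continuous fun y => p.eval y := p.continuous_aeval
    obtain ⟨x, hx⟩ : ∃ x : ℝ, p.eval x = 0 := by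
      rcases le_total a b with hab | hab
      · have := intermediate_value_Icc hab hcont.continuousOn
        obtain ⟨x, _, hx⟩ := this ⟨le_of_lt ha, le_of_lt hb⟩
        exact ⟨x, hx⟩
      · have := intermediate_value_Icc' hab hcont.continuousOn
        obtain ⟨x, _, hx⟩ := this ⟨le_of_lt ha, le_of_lt hb⟩
        exact ⟨x, hx⟩
    set m := p.rootMultiplicity x with hm
    have hmpos : 0 < m := (rootMultiplicity_pos hp).mpr hx
    by_cases hodd : Odd m
    · exact ⟨x, hodd⟩
    have heven : Even m := Nat.not_odd_iff_even.mp hodd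
    set q := p /ₘ (X - C x) ^ m with hqdef
    have hpq : (X - C x) ^ m * q = p := p.pow_mul_divByMonic_rootMultiplicity_eq x
    have hqx : q.eval x ≠ 0 := eval_divByMonic_pow_rootMultiplicity_ne_zero x hp
    have hq0 : q ≠ 0 := fun h => hqx (by rw [h]; simp)
    have hevalp : ∀ y, p.eval y = (y - x) ^ m * q.eval y := by
      intro y; rw [← hpq]; simp
    have hax : a ≠ x := fun h => by rw [h, hx] at ha; exact lt_irrefl _ ha
    have hbx : b ≠ x := fun h => by rw [h, hx] at hb; exact lt_irrefl _ hb
    have hpa : (0:ℝ) < (a - x) ^ m := heven.pow_pos (sub_ne_zero.mpr hax)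
    have hpb : (0:ℝ) < (b - x) ^ m := heven.pow_pos (sub_ne_zero.mpr hbx)
    have hqa : q.eval a < 0 := by
      have := hevalp a; nlinarith
    have hqb : 0 < q.eval b := by
      have := hevalp b; nlinarith
    have hdegq : q.natDegree < n := by
      have : p.natDegree = m + q.natDegree := by
        rw [← hpq, natDegree_mul (pow_ne_zero _ (X_sub_C_ne_zero x)) hq0, natDegree_pow, natDegree_X_sub_C, mul_one]
      omega
    obtain ⟨y, hy⟩ := ih q.natDegree hdegq q rfl hq0 a b hqa hqb
    refine ⟨y, ?_⟩
    have hyx : y ≠ x := by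
      intro h
      rw [h, rootMultiplicity_eq_zero (by simpa [IsRoot] using hqx)] at hy
      exact (Nat.not_odd_zero) hy
    have : p.rootMultiplicity y = ((X - C x) ^ m).rootMultiplicity y + q.rootMultiplicity y := by
      rw [← hpq] at hp ⊢
      exact rootMultiplicity_mul hp
    rw [this, rootMultiplicity_eq_zero (by simp [IsRoot, sub_eq_zero, hyx]), zero_add]
    exact hy

theorem sign_change_iff_odd_multiplicity_root (p : Polynomial ℝ) (hp : p ≠ 0) :
    (∃ a b : ℝ, p.eval a < 0 ∧ 0 < p.eval b) ↔
    ∃ x : ℝ, Odd (Polynomial.rootMultiplicity x p) := by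
  constructor
  · rintro ⟨a, b, ha, hb⟩
    exact sign_change_odd_root p.natDegree p rfl hp a b ha hb
  · rintro ⟨x, hx⟩
    exact odd_root_sign_change p hp x hx
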